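/- Under a fixed ownership assignment of the nodes of a game graph G', namely the assignment own_χ induced by an edge-subset χ of G in the reliability reduction, Max has a winning strategy in the two-player reachability game on G' if and only if s can reach t in the subgraph G(χ) of present edges (and the auxiliary init edge is present). -/
import Mathlib


/-- Max has a strategy to reach `target` regardless of Min's play in the two-player
reachability game with ownership `own` (`true` = Max). -/
inductive MaxWin {V : Type} (E : V → V → Prop) (own : V → Bool) (target : V) : V → Prop where
  | base : MaxWin E own target target
  | maxStep (v w : V) : own v = true → E v w → MaxWin E own target w → MaxWin E own target v
  | minStep (v : V) : own v = false → (∃ w, E v w) →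
      (∀ w, E v w → MaxWin E own target w) → MaxWin E own target v

/-- The game graph `G'` of the reliability reduction (see the paper): nodes are the
edge-nodes `e_uv` (`Sum.inl (Sum.inl e)`), `init` (`Sum.inl (Sum.inr ())`),
`⊤` (`Sum.inr true`) and `⊥` (`Sum.inr false`). -/
def relE {ε V : Type} (src tgt : ε → V) (s t : V) :
    (ε ⊕ Unit) ⊕ Bool → (ε ⊕ Unit) ⊕ Bool → Prop
  | Sum.inl (Sum.inr _), Sum.inl (Sum.inl e) => src e = s
  | Sum.inl (Sum.inl e), Sum.inl (Sum.inl e') => tgt e = src e'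
  | Sum.inl (Sum.inl e), Sum.inr b => (b = true ∧ tgt e = t) ∨ b = false
  | Sum.inl (Sum.inr _), Sum.inr b => b = false
  | Sum.inr b, Sum.inr b' => b = b'
  | _, _ => False

/-- `t` is reachable from `s` in the subgraph `G(χ)` of present edges. -/
def ReachVia {ε V : Type} (src tgt : ε → V) (s t : V) (χ : ε → Bool) : Prop :=
  Relation.ReflTransGen (fun u v => ∃ e, χ e = true ∧ src e = u ∧ tgt e = v) s t

section Aux

variable {ε V : Type} (src tgt : ε → V) (s t : V) (χ : ε ⊕ Unit → Bool)

lemma bot_loses :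
    ¬ MaxWin (relE src tgt s t) (Sum.elim χ fun _ => false) (Sum.inr true) (Sum.inr false) := by
  suffices h : ∀ n, MaxWin (relE src tgt s t) (Sum.elim χ fun _ => false) (Sum.inr true) n →
      n = Sum.inr false → False from fun hw => h _ hw rfl
  intro n h
  induction h with
  | base => intro he; simp at he
  | maxStep v w hv hE hw ih => intro he; subst he; simp at hv
  | minStep v hv hex h ih =>
    intro he; subst he
    exact ih (Sum.inr false) rfl rfl

lemma edge_win :
    ∀ n, MaxWin (relE src tgt s t) (Sum.elim χ fun _ => false) (Sum.inr true) n →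
    ∀ e, n = Sum.inl (Sum.inl e) →
    χ (Sum.inl e) = true ∧ ReachVia src tgt (tgt e) t (fun e => χ (Sum.inl e)) := by
  intro n h
  induction h with
  | base => intro e he; simp at he
  | maxStep v w hv hE hw ih =>
    intro e he; subst he
    simp only [Sum.elim_inl] at hv
    refine ⟨hv, ?_⟩
    match w with
    | Sum.inl (Sum.inl e') =>
      obtain ⟨hχ', hr⟩ := ih e' rfl
      exact Relation.ReflTransGen.head ⟨e', hχ', hE.symm, rfl⟩ hr
    | Sum.inl (Sum.inr u) => exact hE.elim
    | Sum.inr b =>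
      rcases hE with ⟨hb, ht⟩ | hb
      · exact ht ▸ Relation.ReflTransGen.refl
      · subst hb; exact absurd hw (bot_loses src tgt s t χ)
  | minStep v hv hex h ih =>
    intro e he; subst he
    exact absurd (h (Sum.inr false) (Or.inr rfl)) (bot_loses src tgt s t χ)

lemma win_of_reach :
    ∀ u, ReachVia src tgt u t (fun e => χ (Sum.inl e)) →
    ∀ e, χ (Sum.inl e) = true → tgt e = u →
    MaxWin (relE src tgt s t) (Sum.elim χ fun _ => false) (Sum.inr true)
      (Sum.inl (Sum.inl e)) := by
  intro u hr
  induction hr using Relation.ReflTransGen.head_induction_on with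
  | refl =>
    intro e hχ ht
    exact MaxWin.maxStep _ (Sum.inr true) (by simpa using hχ) (Or.inl ⟨rfl, ht⟩) MaxWin.base
  | head hrel hr ih =>
    intro e hχ ht
    obtain ⟨e', hχ', hs', ht'⟩ := hrel
    exact MaxWin.maxStep _ (Sum.inl (Sum.inl e'))
      (by simpa using hχ) (show tgt e = src e' by rw [ht, hs']) (ih e' hχ' ht')

end Aux

/-- Reliability reduction, deterministic form: under the fixed ownership assignment `own_χ`
induced by an edge-subset `χ` (node `e_uv` is Max-owned iff the edge `(u,v)` is present, and
`init` is Max-owned iff the auxiliary init-edge is present), Max has a winning strategy in the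
two-player reachability game on `G'` iff the auxiliary init-edge is present and `s` can reach
`t` in the subgraph `G(χ)` of present edges. -/
theorem reliability_reduction_deterministic {ε V : Type} (src tgt : ε → V) (s t : V)
    (hst : s ≠ t) (χ : ε ⊕ Unit → Bool) :
    MaxWin (relE src tgt s t) (Sum.elim χ fun _ => false) (Sum.inr true)
        (Sum.inl (Sum.inr ())) ↔
      χ (Sum.inr ()) = true ∧ ReachVia src tgt s t (fun e => χ (Sum.inl e)) := by
  constructor
  · intro h
    generalize hn : (Sum.inl (Sum.inr ()) : (ε ⊕ Unit) ⊕ Bool) = n at h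
    induction h with
    | base => simp at hn
    | maxStep v w hv hE hw ih =>
      subst hn
      simp only [Sum.elim_inl] at hv
      refine ⟨hv, ?_⟩
      match w with
      | Sum.inl (Sum.inl e) =>
        obtain ⟨hχ, hr⟩ := edge_win src tgt s t χ _ hw e rfl
        exact Relation.ReflTransGen.head ⟨e, hχ, hE, rfl⟩ hr
      | Sum.inl (Sum.inr u) => exact hE.elim
      | Sum.inr b =>
        subst hE
        exact absurd hw (bot_loses src tgt s t χ)
    | minStep v hv hex h ih =>
      subst hn
      exact absurd (h (Sum.inr false) rfl) (bot_loses src tgt s t χ)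
  · rintro ⟨hinit, hr⟩
    rcases (Relation.ReflTransGen.cases_head hr) with heq | ⟨v, ⟨e, hχ, hs, ht⟩, hr'⟩
    · exact absurd heq hst
    · exact MaxWin.maxStep _ (Sum.inl (Sum.inl e)) (by simpa using hinit) hs
        (win_of_reach src tgt s t χ v hr' e hχ ht)
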